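/- Let k(x,x') = κ(‖x−x'‖) be an isotropic kernel on ℝ^d, where κ : [0,∞) → [0,∞) is nonincreasing and the resulting kernel is symmetric positive semidefinite, let x^(1),…,x^(N) be training inputs and σ_n² > 0 a noise variance. Then for every x ∈ ℝ^d and every ρ > 0 such that at least one training input lies within distance ρ of x, the Gaussian process posterior variance satisfies σ_N²(x) ≤ κ(0) − κ(ρ)² / ( κ(0) + σ_n²/|B_ρ(x)| ), where |B_ρ(x)| is the number of training inputs within Euclidean distance ρ of x. -/

import Mathlib

open Matrix

private lemma gp_cs_aux {N : ℕ} (A : Matrix (Fin N) (Fin N) ℝ) (hA : A.PosDef)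
    (w v : Fin N → ℝ) (hv : v ≠ 0) :
    (v ⬝ᵥ w) ^ 2 / (v ⬝ᵥ (A *ᵥ v)) ≤ w ⬝ᵥ (A⁻¹ *ᵥ w) := by
  set u : Fin N → ℝ := A⁻¹ *ᵥ w with hu
  have hAu : A *ᵥ u = w := by
    rw [hu, Matrix.mulVec_mulVec, Matrix.mul_nonsing_inv _ ((Matrix.isUnit_iff_isUnit_det _).mp hA.isUnit), Matrix.one_mulVec]
  have hAsym : Aᵀ = A := by
    have := hA.isHermitian
    rw [Matrix.IsHermitian, Matrix.conjTranspose_eq_transpose_of_trivial] at this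
    exact this
  have hsymm : ∀ p q : Fin N → ℝ, p ⬝ᵥ (A *ᵥ q) = q ⬝ᵥ (A *ᵥ p) := by
    intro p q
    rw [Matrix.dotProduct_mulVec, ← Matrix.mulVec_transpose, hAsym, dotProduct_comm]
  have ha : 0 < v ⬝ᵥ (A *ᵥ v) := by
    have := hA.dotProduct_mulVec_pos hv
    simpa using this
  set a := v ⬝ᵥ (A *ᵥ v) with haa
  set b := v ⬝ᵥ w with hbb
  set c := w ⬝ᵥ u with hcc
  have key := hA.posSemidef.dotProduct_mulVec_nonneg (a • u - b • v)
  simp only [star_trivial] at key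
  have h1 : u ⬝ᵥ w = c := dotProduct_comm _ _
  have h2 : u ⬝ᵥ (A *ᵥ v) = b := by rw [hsymm u v, hAu]
  have h3 : v ⬝ᵥ (A *ᵥ u) = b := by rw [hAu]
  have expand : (a • u - b • v) ⬝ᵥ (A *ᵥ (a • u - b • v)) = a * (a * c - b * b) := by
    rw [Matrix.mulVec_sub, Matrix.mulVec_smul, Matrix.mulVec_smul, hAu]
    simp only [sub_dotProduct, smul_dotProduct, dotProduct_sub,
      dotProduct_smul, smul_eq_mul, h1, h2, h3]
    ring
  rw [expand] at key
  have hle : b * b ≤ a * c := by nlinarith [key, ha]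
  rw [div_le_iff₀ ha]
  nlinarith [hle]


/-- Corollary 2 (posterior variance bound for isotropic decreasing kernels). -/
theorem gp_posterior_variance_bound_isotropic
    (d N : ℕ) (hN : 1 ≤ N)
    (X : Fin N → EuclideanSpace ℝ (Fin d))
    (σn2 : ℝ) (hσ : 0 < σn2)
    (κ : ℝ → ℝ)
    (hκ_nonneg : ∀ r, 0 ≤ r → 0 ≤ κ r)
    (hκ_anti : AntitoneOn κ (Set.Ici (0 : ℝ)))
    (k : EuclideanSpace ℝ (Fin d) → EuclideanSpace ℝ (Fin d) → ℝ)
    (hk_iso : ∀ x y, k x y = κ ‖x - y‖)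
    (hsymm : ∀ x y, k x y = k y x)
    (hpsd : ∀ (m : ℕ) (z : Fin m → EuclideanSpace ℝ (Fin d)),
      (Matrix.of fun i j => k (z i) (z j)).PosSemidef)
    (x : EuclideanSpace ℝ (Fin d)) (ρ : ℝ) (hρ0 : 0 < ρ)
    (hB : ∃ i, ‖X i - x‖ ≤ ρ) :
    letI K : Matrix (Fin N) (Fin N) ℝ := Matrix.of fun i j => k (X i) (X j)
    letI kN : Fin N → ℝ := fun i => k x (X i)
    letI σ2 : ℝ := k x x - kN ⬝ᵥ ((K + σn2 • (1 : Matrix (Fin N) (Fin N) ℝ))⁻¹ *ᵥ kN)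
    letI B : ℝ := (Finset.univ.filter fun i => ‖X i - x‖ ≤ ρ).card
    σ2 ≤ κ 0 - κ ρ ^ 2 / (κ 0 + σn2 / B) := by
  set S : Finset (Fin N) := Finset.univ.filter fun i => ‖X i - x‖ ≤ ρ with hS
  set B : ℝ := (S.card : ℝ) with hBdef
  set K : Matrix (Fin N) (Fin N) ℝ := Matrix.of fun i j => k (X i) (X j) with hK
  set kN : Fin N → ℝ := fun i => k x (X i) with hkN
  set A : Matrix (Fin N) (Fin N) ℝ := K + σn2 • (1 : Matrix (Fin N) (Fin N) ℝ) with hA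
  show k x x - kN ⬝ᵥ (A⁻¹ *ᵥ kN) ≤ κ 0 - κ ρ ^ 2 / (κ 0 + σn2 / B)
  have hSne : S.Nonempty := by
    obtain ⟨i, hi⟩ := hB
    exact ⟨i, by simp [hS, hi]⟩
  have hBpos : 0 < B := by
    rw [hBdef]
    exact_mod_cast Finset.card_pos.mpr hSne
  have hKpsd : K.PosSemidef := hpsd N X
  have hsm : (σn2 • (1 : Matrix (Fin N) (Fin N) ℝ)).PosDef := by
    have h1 : σn2 • (1 : Matrix (Fin N) (Fin N) ℝ) = Matrix.diagonal (fun _ => σn2) := by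
      ext i j
      by_cases h : i = j <;> simp [Matrix.one_apply, Matrix.diagonal, h]
    rw [h1]
    exact Matrix.PosDef.diagonal (fun _ => hσ)
  have hApd : A.PosDef := Matrix.PosDef.posSemidef_add hKpsd hsm
  -- the test vector
  set v : Fin N → ℝ := fun i => if i ∈ S then 1 / B else 0 with hv
  have hvnn : ∀ i, 0 ≤ v i := by
    intro i; rw [hv]; dsimp only
    split <;> positivity
  have hvne : v ≠ 0 := by
    obtain ⟨i, hi⟩ := hSne
    intro h
    have h2 : v i = 0 := by rw [h]; rfl
    rw [hv] at h2
    simp only [hi, if_true] at h2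
    exact (one_div_ne_zero hBpos.ne') h2
  have hvsum : ∑ i, v i = 1 := by
    rw [hv]
    simp only
    rw [Finset.sum_ite_mem, Finset.univ_inter, Finset.sum_const, nsmul_eq_mul]
    field_simp
    exact hBdef.symm
  have hcs := gp_cs_aux A hApd kN v hvne
  -- bound b = v ⬝ᵥ kN from below by κ ρ
  have hkNi : ∀ i ∈ S, κ ρ ≤ kN i := by
    intro i hi
    rw [hS, Finset.mem_filter] at hi
    have hd : ‖x - X i‖ ≤ ρ := by rw [norm_sub_rev]; exact hi.2
    have h3 : κ ρ ≤ κ ‖x - X i‖ :=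
      hκ_anti (Set.mem_Ici.mpr (norm_nonneg _)) (Set.mem_Ici.mpr hρ0.le) hd
    rw [hkN]
    dsimp only
    rw [hk_iso]
    exact h3
  have hb : κ ρ ≤ v ⬝ᵥ kN := by
    have hbval : v ⬝ᵥ kN = ∑ i ∈ S, (1 / B) * kN i := by
      rw [dotProduct]
      rw [show (fun i => v i * kN i) = fun i => if i ∈ S then (1/B) * kN i else 0 by
        funext i; rw [hv]; by_cases h : i ∈ S <;> simp [h]]
      rw [Finset.sum_ite_mem, Finset.univ_inter]
    rw [hbval]
    calc κ ρ = ∑ _i ∈ S, (1 / B) * κ ρ := by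
            rw [Finset.sum_const, nsmul_eq_mul]
            field_simp [hBdef]
            rw [hBdef]
      _ ≤ _ := Finset.sum_le_sum fun i hi =>
          mul_le_mul_of_nonneg_left (hkNi i hi) (by positivity)
  -- bound a = v ⬝ᵥ A *ᵥ v from above
  have hKij : ∀ i j, K i j ≤ κ 0 := by
    intro i j
    show k (X i) (X j) ≤ κ 0
    rw [hk_iso]
    exact hκ_anti (Set.mem_Ici.mpr le_rfl) (Set.mem_Ici.mpr (norm_nonneg _)) (norm_nonneg _)
  have hvv : v ⬝ᵥ v = 1 / B := by
    rw [dotProduct]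
    rw [show (fun i => v i * v i) = fun i => if i ∈ S then (1/B) * (1/B) else 0 by
      funext i; rw [hv]; by_cases h : i ∈ S <;> simp [h]]
    rw [Finset.sum_ite_mem, Finset.univ_inter, Finset.sum_const, nsmul_eq_mul]
    field_simp
    exact hBdef.symm
  have hvKv : v ⬝ᵥ (K *ᵥ v) ≤ κ 0 := by
    have step : v ⬝ᵥ (K *ᵥ v) ≤ ∑ i, v i * (κ 0 * ∑ j, v j) := by
      rw [dotProduct]
      refine Finset.sum_le_sum fun i _ => ?_
      refine mul_le_mul_of_nonneg_left ?_ (hvnn i)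
      rw [Matrix.mulVec, dotProduct, Finset.mul_sum]
      exact Finset.sum_le_sum fun j _ => mul_le_mul_of_nonneg_right (hKij i j) (hvnn j)
    calc v ⬝ᵥ (K *ᵥ v) ≤ ∑ i, v i * (κ 0 * ∑ j, v j) := step
      _ = (∑ i, v i) * (κ 0 * ∑ j, v j) := by rw [Finset.sum_mul]
      _ = κ 0 := by rw [hvsum]; ring
  have ha_ub : v ⬝ᵥ (A *ᵥ v) ≤ κ 0 + σn2 / B := by
    have : A *ᵥ v = K *ᵥ v + σn2 • v := by
      rw [hA, Matrix.add_mulVec, Matrix.smul_mulVec, Matrix.one_mulVec]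
    rw [this, dotProduct_add, dotProduct_smul, smul_eq_mul, hvv]
    have : σn2 * (1 / B) = σn2 / B := by ring
    rw [this]
    linarith [hvKv]
  have ha_pos : 0 < v ⬝ᵥ (A *ᵥ v) := by
    have := hApd.dotProduct_mulVec_pos hvne
    simpa using this
  have hD_pos : 0 < κ 0 + σn2 / B := by
    have := hκ_nonneg 0 le_rfl
    positivity
  have hchain : κ ρ ^ 2 / (κ 0 + σn2 / B) ≤ (v ⬝ᵥ kN) ^ 2 / (v ⬝ᵥ (A *ᵥ v)) := by
    refine div_le_div₀ (sq_nonneg _) ?_ ha_pos ha_ub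
    exact pow_le_pow_left₀ (hκ_nonneg ρ hρ0.le) hb 2
  have hxx : k x x = κ 0 := by rw [hk_iso, sub_self, norm_zero]
  rw [hxx]
  linarith [le_trans hchain hcs]
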